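/- Let u be a continuous real-valued function on the disjoint union of two unit circles ∂𝔻⁺ and ∂𝔻⁻ (boundaries of two disks joined at their centers 0⁺, 0⁻). Then u is the real part of the boundary values of a function f holomorphic on 𝔻⁺ ∪ 𝔻⁻ with f(0⁺) = f(0⁻) (i.e., holomorphic on V = {z² = w²} ∩ 𝔻²) if and only if the mean of u over ∂𝔻⁺ equals the mean of u over ∂𝔻⁻. -/

import Mathlib

open Complex Metric Real intervalIntegral Filter

lemma mv18 {f : ℂ → ℂ} {r : ℝ} (hr : 0 < r) (hf : DiffContOnCl ℂ f (ball 0 r)) :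
    (∫ θ in (0:ℝ)..(2*π), f (r * Complex.exp (θ * Complex.I))) = (2*π) * f 0 := by
  have h := hf.two_pi_i_inv_smul_circleIntegral_sub_inv_smul (w := 0) (by simpa using hr)
  rw [circleIntegral] at h
  simp only [sub_zero, deriv_circleMap, circleMap, ofReal_zero, zero_add, smul_eq_mul] at h
  have h2 : (∫ θ in (0:ℝ)..(2*π), (r * exp (θ * I) * I) * ((r * exp (θ * I))⁻¹ * f (r * exp (θ * I))))
      = ∫ θ in (0:ℝ)..(2*π), I * f (r * exp (θ * I)) := by
    apply intervalIntegral.integral_congr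
    intro θ _
    have hne : (r : ℂ) * exp (θ * I) ≠ 0 := by
      apply mul_ne_zero (by exact_mod_cast hr.ne') (Complex.exp_ne_zero _)
    have hr0 : (r:ℂ) ≠ 0 := by exact_mod_cast hr.ne'
    field_simp
  rw [h2] at h
  rw [intervalIntegral.integral_const_mul] at h
  have hπ : (2*π*I : ℂ) ≠ 0 := by
    simp [Complex.ext_iff, Real.pi_ne_zero, I_re, I_im]
  rw [inv_mul_eq_iff_eq_mul₀ hπ] at h
  exact mul_left_cancel₀ I_ne_zero (h.trans (by ring))

lemma expI_mem_sphere (θ : ℝ) : Complex.exp (θ * Complex.I) ∈ sphere (0:ℂ) 1 := by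
  simp [Complex.norm_exp]

lemma rexpc_mem {r θ : ℝ} (h0 : 0 ≤ r) (h1 : r ≤ 1) :
    (r:ℂ) * Complex.exp (θ * Complex.I) ∈ closedBall (0:ℂ) 1 := by
  simp only [mem_closedBall, dist_zero_right, norm_mul, Real.norm_eq_abs, Complex.norm_exp,
    Complex.mul_I_re, Complex.ofReal_im, neg_zero, Real.exp_zero, mul_one, Complex.norm_real,
    _root_.abs_of_nonneg h0]
  exact h1

lemma mv18re {f : ℂ → ℂ} {r : ℝ} (hr : 0 < r) (hf : DiffContOnCl ℂ f (ball 0 r)) :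
    (∫ θ in (0:ℝ)..(2*π), (f (r * Complex.exp (θ * Complex.I))).re) = (2*π) * (f 0).re := by
  have hcont : Continuous (fun θ : ℝ => f ((r:ℂ) * Complex.exp (θ * Complex.I))) := by
    apply (hf.continuousOn).comp_continuous
      (continuous_const.mul ((Complex.continuous_ofReal.mul continuous_const).cexp))
    intro θ
    rw [closure_ball (0:ℂ) hr.ne']
    show (r:ℂ) * Complex.exp (θ * Complex.I) ∈ closedBall (0:ℂ) r
    simp only [mem_closedBall, dist_zero_right, norm_mul, Real.norm_eq_abs, Complex.norm_exp,
      Complex.mul_I_re, Complex.ofReal_im, neg_zero, Real.exp_zero, mul_one, Complex.norm_real,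
      _root_.abs_of_nonneg hr.le, le_refl]
  have h := mv18 hr hf
  have h2 := Complex.reCLM.intervalIntegral_comp_comm
    (hcont.intervalIntegrable (μ := MeasureTheory.volume) (0:ℝ) (2*π))
  simp only [Complex.reCLM_apply] at h2
  rw [h2, h]
  simp

lemma contInt {g : ℂ → ℝ} (hg : ContinuousOn g (closedBall (0:ℂ) 1)) {r : ℝ}
    (hr0 : 0 ≤ r) (hr1 : r ≤ 1) :
    Continuous (fun θ : ℝ => g (r * Complex.exp (θ * Complex.I))) := by
  apply hg.comp_continuous
  · exact continuous_const.mul ((Complex.continuous_ofReal.mul continuous_const).cexp)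
  · intro θ
    exact rexpc_mem hr0 hr1

lemma bdryLimit {g : ℂ → ℝ} (hg : ContinuousOn g (closedBall (0:ℂ) 1))
    {r : ℕ → ℝ} (hr : ∀ n, r n ∈ Set.Icc (0:ℝ) 1) (hr1 : Filter.Tendsto r Filter.atTop (nhds 1)) :
    Filter.Tendsto (fun n : ℕ => ∫ θ in (0:ℝ)..(2*π), g (r n * Complex.exp (θ * Complex.I)))
      Filter.atTop (nhds (∫ θ in (0:ℝ)..(2*π), g (Complex.exp (θ * Complex.I)))) := by
  obtain ⟨C, hC⟩ := (isCompact_closedBall (0:ℂ) 1).exists_bound_of_continuousOn hg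
  apply intervalIntegral.tendsto_integral_filter_of_dominated_convergence (fun _ => C)
  · exact Filter.Eventually.of_forall fun n =>
      ((contInt hg (hr n).1 (hr n).2).aestronglyMeasurable)
  · refine Filter.Eventually.of_forall fun n => Filter.Eventually.of_forall fun θ _ => ?_
    exact hC _ (rexpc_mem (hr n).1 (hr n).2)
  · exact intervalIntegrable_const
  · refine Filter.Eventually.of_forall fun θ _ => ?_
    have hmem : ∀ n, (r n : ℂ) * Complex.exp (θ * Complex.I) ∈ closedBall (0:ℂ) 1 := by
      intro n
      exact rexpc_mem (hr n).1 (hr n).2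
    have h1 : Filter.Tendsto (fun n => (r n : ℂ) * Complex.exp (θ * Complex.I)) Filter.atTop
        (nhds (Complex.exp (θ * Complex.I))) := by
      have : Filter.Tendsto (fun n => (r n : ℂ)) Filter.atTop (nhds 1) :=
        (Complex.continuous_ofReal.tendsto 1).comp hr1
      simpa using this.mul_const _
    have h2 := (hg _ (sphere_subset_closedBall (expI_mem_sphere θ))).tendsto
    exact h2.comp (tendsto_nhdsWithin_iff.2 ⟨by simpa using h1,
      Filter.Eventually.of_forall hmem⟩)

lemma rexpc_mem_ball {r θ : ℝ} (h0 : 0 ≤ r) (h1 : r < 1) :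
    (r:ℂ) * Complex.exp (θ * Complex.I) ∈ ball (0:ℂ) 1 := by
  simp only [mem_ball, dist_zero_right, norm_mul, Real.norm_eq_abs, Complex.norm_exp,
    Complex.mul_I_re, Complex.ofReal_im, neg_zero, Real.exp_zero, mul_one, Complex.norm_real,
    _root_.abs_of_nonneg h0]
  exact h1

lemma fwd18 {f : ℂ → ℂ} {g u : ℂ → ℝ} (hf : DifferentiableOn ℂ f (ball (0:ℂ) 1))
    (hg : ContinuousOn g (closedBall (0:ℂ) 1))
    (hgf : ∀ z ∈ ball (0:ℂ) 1, g z = (f z).re)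
    (hgu : ∀ z ∈ sphere (0:ℂ) 1, g z = u z) :
    (∫ θ in (0:ℝ)..(2*π), u (Complex.exp (θ * Complex.I))) = (2*π) * (f 0).re := by
  set r : ℕ → ℝ := fun n => 1 - 1/(n+2) with hrdef
  have hr : ∀ n, r n ∈ Set.Icc (0:ℝ) 1 := by
    intro n
    constructor
    · have h2 : (1:ℝ)/(n+2) ≤ 1 := by
        rw [div_le_one (by positivity)]; linarith [Nat.cast_nonneg (α := ℝ) n]
      simp only [hrdef]; linarith
    · have : (0:ℝ) < 1/(n+2) := by positivity
      simp only [hrdef]; linarith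
  have hrpos : ∀ n, 0 < r n := by
    intro n
    have h2 : (1:ℝ)/(n+2) < 1 := by
      rw [div_lt_one (by positivity)]; linarith [Nat.cast_nonneg (α := ℝ) n]
    simp only [hrdef]; linarith
  have hr1 : Filter.Tendsto r Filter.atTop (nhds 1) := by
    have hn : Filter.Tendsto (fun n : ℕ => ((n:ℝ)+2)) Filter.atTop Filter.atTop :=
      Filter.tendsto_atTop_add_const_right _ 2 tendsto_natCast_atTop_atTop
    have h0 : Filter.Tendsto (fun n : ℕ => ((n:ℝ)+2)⁻¹) Filter.atTop (nhds 0) :=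
      hn.inv_tendsto_atTop
    have h1 := (tendsto_const_nhds (x := (1:ℝ)) (f := Filter.atTop (α := ℕ))).sub h0
    simpa [hrdef, one_div] using h1
  -- each n: integral equals 2π (f 0).re
  have hmean : ∀ n, (∫ θ in (0:ℝ)..(2*π), g (r n * Complex.exp (θ * Complex.I)))
      = (2*π) * (f 0).re := by
    intro n
    have hball : closedBall (0:ℂ) (r n) ⊆ ball (0:ℂ) 1 := by
      apply closedBall_subset_ball
      have : (0:ℝ) < 1/(n+2) := by positivity
      simp only [hrdef]; linarith
    have hdc : DiffContOnCl ℂ f (ball (0:ℂ) (r n)) := by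
      constructor
      · exact hf.mono ((ball_subset_closedBall).trans hball)
      · rw [closure_ball (0:ℂ) (hrpos n).ne']
        exact hf.continuousOn.mono hball
    have := mv18re (hrpos n) hdc
    rw [← this]
    apply intervalIntegral.integral_congr
    intro θ _
    apply hgf
    apply rexpc_mem_ball (hr n).1
    have : (0:ℝ) < 1/(n+2) := by positivity
    simp only [hrdef]; linarith
  have hlim := bdryLimit hg hr hr1
  simp only [hmean] at hlim
  have := tendsto_nhds_unique hlim tendsto_const_nhds
  rw [← this]
  apply intervalIntegral.integral_congr
  intro θ _
  exact (hgu _ (expI_mem_sphere θ)).symm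

lemma maxRe18 {h : ℂ → ℂ} (hd : Differentiable ℂ h) {C : ℝ}
    (hC : ∀ z ∈ sphere (0:ℂ) 1, (h z).re ≤ C) :
    ∀ z ∈ closedBall (0:ℂ) 1, (h z).re ≤ C := by
  intro z hz
  have key : ‖Complex.exp (h z)‖ ≤ Real.exp C := by
    apply Complex.norm_le_of_forall_mem_frontier_norm_le (isBounded_ball (x := (0:ℂ)) (r := 1))
      (hd.cexp.differentiableOn.diffContOnCl)
    · intro w hw
      rw [frontier_ball (0:ℂ) one_ne_zero] at hw
      rw [Complex.norm_exp]
      exact Real.exp_le_exp.2 (hC w hw)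
    · rwa [closure_ball (0:ℂ) one_ne_zero]
  rw [Complex.norm_exp] at key
  exact Real.exp_le_exp.1 key

lemma bc18 {h : ℂ → ℂ} (hd : Differentiable ℂ h) (h0 : h 0 = 0) {δ : ℝ} (hδ : 0 < δ)
    (hRe : ∀ z ∈ closedBall (0:ℂ) 1, (h z).re ≤ δ) {z : ℂ} (hz : ‖z‖ < 1) :
    ‖h z‖ ≤ 2*δ*‖z‖/(1-‖z‖) := by
  set φ : ℂ → ℂ := fun w => h w / (h w - 2*δ) with hφdef
  have hz' : z ∈ ball (0:ℂ) 1 := by simpa [mem_ball, dist_zero_right] using hz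
  have hne : ∀ w ∈ closedBall (0:ℂ) 1, h w - 2*(δ:ℂ) ≠ 0 := by
    intro w hw hc
    have h1 := hRe w hw
    have h2 : (h w - 2*(δ:ℂ)).re = (h w).re - 2*δ := by simp
    rw [hc] at h2
    simp only [Complex.zero_re] at h2
    linarith
  have hnorm : ∀ w ∈ closedBall (0:ℂ) 1, ‖h w‖ ≤ ‖h w - 2*(δ:ℂ)‖ := by
    intro w hw
    have hre := hRe w hw
    have key : Complex.normSq (h w) ≤ Complex.normSq (h w - 2*δ) := by
      have e1 : Complex.normSq (h w - 2*(δ:ℂ)) =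
          Complex.normSq (h w) - 4*δ*(h w).re + 4*δ^2 := by
        simp only [Complex.normSq_apply, Complex.sub_re, Complex.sub_im, Complex.mul_re,
          Complex.mul_im, Complex.ofReal_re, Complex.ofReal_im, Complex.re_ofNat,
          Complex.im_ofNat]
        ring
      nlinarith
    rw [Complex.norm_def, Complex.norm_def]
    exact Real.sqrt_le_sqrt key
  have hφd : DifferentiableOn ℂ φ (ball (0:ℂ) 1) := by
    apply DifferentiableOn.div hd.differentiableOn ((hd.sub_const _).differentiableOn)
    intro w hw
    exact hne w (ball_subset_closedBall hw)
  have hφ0 : φ 0 = 0 := by simp [hφdef, h0]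
  have hφle : ∀ w ∈ ball (0:ℂ) 1, ‖φ w‖ ≤ 1 := by
    intro w hw
    rw [hφdef]
    simp only [norm_div]
    rw [div_le_one (norm_pos_iff.2 (hne w (ball_subset_closedBall hw)))]
    exact hnorm w (ball_subset_closedBall hw)
  -- Schwarz lemma
  have hschwarz : ‖φ z‖ ≤ ‖z‖ := by
    have hstep : ∀ R₂ : ℝ, 1 < R₂ → ‖φ z‖ ≤ R₂ * ‖z‖ := by
      intro R₂ hR₂
      have hmap : Set.MapsTo φ (ball (0:ℂ) 1) (ball (φ 0) R₂) := by
        intro w hw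
        rw [mem_ball, hφ0, dist_zero_right]
        exact lt_of_le_of_lt (hφle w hw) hR₂
      have := Complex.dist_le_div_mul_dist_of_mapsTo_ball hφd (hmap.mono_right ball_subset_closedBall) hz'
      simpa [hφ0, dist_zero_right, div_one] using this
    have htend : Filter.Tendsto (fun n : ℕ => (1 + 1/((n:ℝ)+1)) * ‖z‖) Filter.atTop
        (nhds ‖z‖) := by
      have h0 : Filter.Tendsto (fun n : ℕ => 1/((n:ℝ)+1)) Filter.atTop (nhds 0) :=
        tendsto_one_div_add_atTop_nhds_zero_nat
      have := ((tendsto_const_nhds (x := (1:ℝ)) (f := Filter.atTop (α := ℕ))).add h0).mul_const ‖z‖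
      simpa using this
    apply ge_of_tendsto htend
    filter_upwards with n
    apply hstep
    have : (0:ℝ) < 1/((n:ℝ)+1) := by positivity
    linarith
  -- recover h
  have hiden : h z * (φ z - 1) = 2*δ*(φ z) := by
    have hnz := hne z (ball_subset_closedBall hz')
    rw [hφdef]
    field_simp
    ring
  have hden : (1:ℝ) - ‖z‖ ≤ ‖φ z - 1‖ := by
    have h3 : ‖(1:ℂ)‖ - ‖φ z‖ ≤ ‖(1:ℂ) - φ z‖ := norm_sub_norm_le 1 (φ z)
    rw [norm_sub_rev] at h3
    simp only [norm_one] at h3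
    linarith
  have hdenpos : (0:ℝ) < 1 - ‖z‖ := by linarith
  have hmuleq : ‖h z‖ * ‖φ z - 1‖ = 2*δ*‖φ z‖ := by
    have := congrArg norm hiden
    simpa [norm_mul, Complex.norm_real, Real.norm_eq_abs, abs_of_pos hδ] using this
  have hnum : ‖h z‖ * (1 - ‖z‖) ≤ 2*δ*‖z‖ := by
    calc ‖h z‖ * (1 - ‖z‖) ≤ ‖h z‖ * ‖φ z - 1‖ := by
          exact mul_le_mul_of_nonneg_left hden (norm_nonneg _)
      _ = 2*δ*‖φ z‖ := hmuleq
      _ ≤ 2*δ*‖z‖ := by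
          exact mul_le_mul_of_nonneg_left hschwarz (by positivity)
  rw [le_div_iff₀ hdenpos]
  exact hnum

lemma span_decomp (w : C(AddCircle (2*π), ℂ))
    (hw : w ∈ Submodule.span ℂ (Set.range (@fourier (2*π)))) :
    ∃ F G : ℂ → ℂ, Differentiable ℂ F ∧ Differentiable ℂ G ∧
      ∀ θ : ℝ, w (θ : AddCircle (2*π)) =
        F (Complex.exp (θ*Complex.I)) + (starRingEnd ℂ) (G (Complex.exp (θ*Complex.I))) := by
  induction hw using Submodule.span_induction with
  | mem x hx =>
    obtain ⟨n, rfl⟩ := hx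
    have hfour : ∀ θ : ℝ, (fourier n : C(AddCircle (2*π), ℂ)) (θ : AddCircle (2*π))
        = Complex.exp (θ*Complex.I) ^ n := by
      intro θ
      rw [fourier_coe_apply]
      rw [← Complex.exp_int_mul]
      congr 1
      have hπ : (π:ℂ) ≠ 0 := by exact_mod_cast Real.pi_ne_zero
      field_simp
      push_cast
      ring
    rcases le_or_gt 0 n with hn | hn
    · refine ⟨fun z => z ^ n.toNat, 0, differentiable_pow _, differentiable_const _, fun θ => ?_⟩
      rw [hfour θ]
      simp only [Pi.zero_apply, map_zero, add_zero]
      rw [← zpow_natCast]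
      congr 1
      omega
    · refine ⟨0, fun z => z ^ (-n).toNat, differentiable_const _, differentiable_pow _, fun θ => ?_⟩
      rw [hfour θ]
      simp only [Pi.zero_apply, zero_add]
      rw [← Complex.exp_nat_mul, ← Complex.exp_int_mul, ← Complex.exp_conj]
      congr 1
      have h3 : ((-n).toNat : ℂ) = -(n:ℂ) := by
        have h4 : ((-n).toNat : ℤ) = -n := Int.toNat_of_nonneg (by omega)
        exact_mod_cast congrArg (Int.cast : ℤ → ℂ) h4
      rw [map_mul, map_mul, Complex.conj_ofReal, Complex.conj_I]
      have h5 : (starRingEnd ℂ) ((-n).toNat : ℂ) = ((-n).toNat : ℂ) := by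
        simp [Complex.conj_natCast]
      rw [h5, h3]
      ring
  | zero => exact ⟨0, 0, differentiable_const _, differentiable_const _, by simp⟩
  | add x y hx hy ihx ihy =>
    obtain ⟨F₁, G₁, hF₁, hG₁, h₁⟩ := ihx
    obtain ⟨F₂, G₂, hF₂, hG₂, h₂⟩ := ihy
    refine ⟨F₁ + F₂, G₁ + G₂, hF₁.add hF₂, hG₁.add hG₂, fun θ => ?_⟩
    simp only [ContinuousMap.add_apply, h₁ θ, h₂ θ, Pi.add_apply, map_add]
    ring
  | smul c x hx ihx =>
    obtain ⟨F, G, hF, hG, hx⟩ := ihx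
    refine ⟨fun z => c * F z, fun z => (starRingEnd ℂ) c * G z,
      (differentiable_const _).mul hF, (differentiable_const _).mul hG, fun θ => ?_⟩
    simp only [ContinuousMap.smul_apply, smul_eq_mul, hx θ, map_mul, Complex.conj_conj]
    ring

lemma approx18 {u : ℂ → ℝ} (hu : ContinuousOn u (sphere (0:ℂ) 1)) {ε : ℝ} (hε : 0 < ε) :
    ∃ f : ℂ → ℂ, Differentiable ℂ f ∧ (f 0).im = 0 ∧
      ∀ z ∈ sphere (0:ℂ) 1, |u z - (f z).re| ≤ ε := by
  haveI : Fact (0 < 2*π) := ⟨by positivity⟩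
  set v0 : ℝ → ℂ := fun θ => (u (Complex.exp (θ * Complex.I)) : ℂ) with hv0
  have hv0cont : Continuous v0 := by
    apply Complex.continuous_ofReal.comp
    apply hu.comp_continuous ((Complex.continuous_ofReal.mul continuous_const).cexp)
    exact fun θ => expI_mem_sphere θ
  have hv0per : Function.Periodic v0 (2*π) := by
    intro θ
    simp only [hv0]
    congr 2
    rw [Complex.ofReal_add, add_mul, Complex.exp_add]
    simp [Complex.exp_two_pi_mul_I]
  set v : C(AddCircle (2*π), ℂ) := ⟨hv0per.lift, hv0cont.quotient_liftOn' _⟩ with hv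
  -- density
  have hmem : v ∈ closure ((Submodule.span ℂ (Set.range (@fourier (2*π)))) : Set _) := by
    have htop := span_fourier_closure_eq_top (T := 2*π)
    have : v ∈ (Submodule.span ℂ (Set.range (@fourier (2*π)))).topologicalClosure := by
      rw [htop]; trivial
    rwa [← Submodule.topologicalClosure_coe]
  rw [Metric.mem_closure_iff] at hmem
  obtain ⟨w, hwmem, hwdist⟩ := hmem ε hε
  obtain ⟨F, G, hF, hG, hFG⟩ := span_decomp w hwmem
  set c : ℂ := F 0 + G 0 with hc
  refine ⟨fun z => F z + G z - ((F 0 + G 0).im : ℂ) * Complex.I,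
    (hF.add hG).sub_const _, by simp, ?_⟩
  intro z hz
  have hzeq : Complex.exp ((Complex.arg z : ℂ) * Complex.I) = z := by
    have h1 := Complex.norm_mul_exp_arg_mul_I z
    have h2 : ‖z‖ = 1 := mem_sphere_zero_iff_norm.1 hz
    rw [h2] at h1
    simpa using h1
  set θ := Complex.arg z with hθ
  have hre : ((fun z => F z + G z - ((F 0 + G 0).im : ℂ) * Complex.I) z).re
      = (w (θ : AddCircle (2*π))).re := by
    rw [hFG θ, hzeq]
    simp [Complex.add_re, Complex.sub_re, Complex.conj_re]
  rw [hre]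
  have hv0z : v0 θ = (u z : ℂ) := by
    show (u (Complex.exp ((θ:ℂ) * Complex.I)) : ℂ) = (u z : ℂ)
    rw [hzeq]
  have hd : dist (v (θ : AddCircle (2*π))) (w (θ : AddCircle (2*π))) ≤ dist v w :=
    ContinuousMap.dist_apply_le_dist _
  have hvθ : v (θ : AddCircle (2*π)) = (u z : ℂ) := by
    show hv0per.lift (θ : AddCircle (2*π)) = _
    rw [Function.Periodic.lift_coe, hv0z]
  rw [hvθ] at hd
  have : |u z - (w (θ : AddCircle (2*π))).re| ≤ dist ((u z : ℂ)) (w (θ : AddCircle (2*π))) := by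
    rw [Complex.dist_eq]
    have := Complex.abs_re_le_norm ((u z : ℂ) - w (θ : AddCircle (2*π)))
    simpa [Complex.sub_re, Complex.ofReal_re] using this
  exact this.trans (hd.trans hwdist.le)

lemma dirichlet18 {u : ℂ → ℝ} (hu : ContinuousOn u (sphere (0:ℂ) 1)) :
    ∃ f : ℂ → ℂ, ∃ g : ℂ → ℝ,
      DifferentiableOn ℂ f (ball (0:ℂ) 1) ∧
      ContinuousOn g (closedBall (0:ℂ) 1) ∧
      (∀ z ∈ ball (0:ℂ) 1, g z = (f z).re) ∧
      (∀ z ∈ sphere (0:ℂ) 1, g z = u z) ∧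
      f 0 = (((2*π)⁻¹ * ∫ θ in (0:ℝ)..(2*π), u (Complex.exp (θ * Complex.I)) : ℝ) : ℂ) := by
  set δ : ℕ → ℝ := fun k => 1/((k:ℝ)+1) with hδdef
  have hδpos : ∀ k, 0 < δ k := fun k => by positivity
  have hδanti : ∀ {k l : ℕ}, k ≤ l → δ l ≤ δ k := by
    intro k l hkl
    apply one_div_le_one_div_of_le (by positivity)
    have : (k:ℝ) ≤ l := Nat.cast_le.2 hkl
    linarith
  have hδ0 : Tendsto δ atTop (nhds 0) := tendsto_one_div_add_atTop_nhds_zero_nat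
  choose f hfd hfi hfu using fun k => approx18 hu (hδpos k)
  -- interior/closed-ball Cauchy estimates
  have he : ∀ k l, ∀ z ∈ closedBall (0:ℂ) 1, |(f k z - f l z).re| ≤ δ k + δ l := by
    intro k l
    have haux : ∀ k l, ∀ z ∈ closedBall (0:ℂ) 1, (f k z - f l z).re ≤ δ k + δ l := by
      intro k l
      apply maxRe18 ((hfd k).sub (hfd l))
      intro z hz
      have h1 := hfu k z hz
      have h2 := hfu l z hz
      rw [abs_le] at h1 h2
      simp only [Pi.sub_apply, Complex.sub_re]
      linarith [h1.1, h1.2, h2.1, h2.2]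
    intro z hz
    rw [abs_le]
    constructor
    · have := haux l k z hz
      simp only [Complex.sub_re] at this ⊢
      linarith
    · exact haux k l z hz
  have h0r : ∀ k, f k 0 = (((f k 0).re : ℝ) : ℂ) := by
    intro k
    rw [← Complex.re_add_im (f k 0), hfi k]
    simp
  have h0dist : ∀ k l, ‖f k 0 - f l 0‖ ≤ δ k + δ l := by
    intro k l
    have := he k l 0 (mem_closedBall_self zero_le_one)
    calc ‖f k 0 - f l 0‖ = ‖(((f k 0).re - (f l 0).re : ℝ) : ℂ)‖ := by
          rw [h0r k, h0r l]; norm_cast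
      _ = |(f k 0).re - (f l 0).re| := by rw [Complex.norm_real, Real.norm_eq_abs]
      _ ≤ δ k + δ l := by simpa [Complex.sub_re] using this
  have hball : ∀ k l, ∀ z : ℂ, ‖z‖ < 1 →
      ‖f k z - f l z‖ ≤ (δ k + δ l) * (5 + 4/(1-‖z‖)) := by
    intro k l z hz
    set h : ℂ → ℂ := fun w => (f k w - f l w) - (f k 0 - f l 0) with hhdef
    have hd : Differentiable ℂ h := ((hfd k).sub (hfd l)).sub_const _
    have hh0 : h 0 = 0 := by simp [hhdef]
    have hhre : ∀ w ∈ closedBall (0:ℂ) 1, (h w).re ≤ 2*(δ k + δ l) := by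
      intro w hw
      have h1 := he k l w hw
      have h2 := he k l 0 (mem_closedBall_self zero_le_one)
      rw [abs_le] at h1 h2
      simp only [Complex.sub_re] at h1 h2
      simp only [hhdef, Complex.sub_re]
      linarith [h1.2, h2.1]
    have hbc := bc18 hd hh0 (by positivity : (0:ℝ) < 2*(δ k + δ l)) hhre hz
    have hz1 : ‖z‖ ≤ 1 := hz.le
    have hdp : (0:ℝ) < 1 - ‖z‖ := by linarith
    have hbnd : ‖h z‖ ≤ 4*(δ k + δ l)/(1-‖z‖) := by
      refine hbc.trans ?_
      have h1 : 2*(2*(δ k + δ l))*‖z‖ ≤ 4*(δ k + δ l) := by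
        nlinarith [norm_nonneg z, (hδpos k).le, (hδpos l).le]
      rw [div_le_div_iff₀ hdp hdp]
      nlinarith [h1, hdp]
    have htri : ‖f k z - f l z‖ ≤ ‖h z‖ + ‖f k 0 - f l 0‖ := by
      have : f k z - f l z = h z + (f k 0 - f l 0) := by simp [hhdef]
      rw [this]
      exact norm_add_le _ _
    have := h0dist k l
    have h4 : 4*(δ k + δ l)/(1-‖z‖) = (δ k + δ l) * (4/(1-‖z‖)) := by ring
    calc ‖f k z - f l z‖ ≤ 4*(δ k + δ l)/(1-‖z‖) + (δ k + δ l) := by linarith [htri, hbnd]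
      _ ≤ (δ k + δ l) * (5 + 4/(1-‖z‖)) := by
          rw [h4]
          have hδs : 0 ≤ δ k + δ l := by positivity
          nlinarith
  -- definitions of limits
  set G : ℂ → ℝ := fun z => limUnder atTop (fun k => (f k z).re) with hGdef
  set F : ℂ → ℂ := fun z => limUnder atTop (fun k => f k z) with hFdef
  have hGcauchy : ∀ z ∈ closedBall (0:ℂ) 1, CauchySeq (fun k => (f k z).re) := by
    intro z hz
    apply cauchySeq_of_le_tendsto_0 (fun N => 2 * δ N) ?_ ?_
    · intro n m N hn hm
      rw [Real.dist_eq]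
      calc |(f n z).re - (f m z).re| = |(f n z - f m z).re| := by rw [Complex.sub_re]
        _ ≤ δ n + δ m := he n m z hz
        _ ≤ 2 * δ N := by linarith [hδanti hn, hδanti hm]
    · have h2 := hδ0.const_mul 2
      rwa [mul_zero] at h2
  have hGt : ∀ z ∈ closedBall (0:ℂ) 1, Tendsto (fun k => (f k z).re) atTop (nhds (G z)) :=
    fun z hz => (hGcauchy z hz).tendsto_limUnder
  have hFcauchy : ∀ z : ℂ, ‖z‖ < 1 → CauchySeq (fun k => f k z) := by
    intro z hz
    apply cauchySeq_of_le_tendsto_0 (fun N => 2 * δ N * (5 + 4/(1-‖z‖))) ?_ ?_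
    · intro n m N hn hm
      rw [dist_eq_norm]
      calc ‖f n z - f m z‖ ≤ (δ n + δ m) * (5 + 4/(1-‖z‖)) := hball n m z hz
        _ ≤ 2 * δ N * (5 + 4/(1-‖z‖)) := by
            have hpos : (0:ℝ) < 5 + 4/(1-‖z‖) := by
              have : (0:ℝ) < 1 - ‖z‖ := by linarith
              positivity
            have := hδanti hn
            have := hδanti hm
            nlinarith
    · have h2 := (hδ0.const_mul 2).mul_const (5 + 4/(1-‖z‖))
      rwa [mul_zero, zero_mul] at h2
  have hFt : ∀ z : ℂ, ‖z‖ < 1 → Tendsto (fun k => f k z) atTop (nhds (F z)) :=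
    fun z hz => (hFcauchy z hz).tendsto_limUnder
  -- uniform closeness
  have hGu : ∀ k, ∀ z ∈ closedBall (0:ℂ) 1, |(f k z).re - G z| ≤ 2 * δ k := by
    intro k z hz
    have h1 : Tendsto (fun l => |(f k z).re - (f l z).re|) atTop (nhds |(f k z).re - G z|) :=
      ((tendsto_const_nhds.sub (hGt z hz)).abs)
    apply le_of_tendsto h1
    filter_upwards [eventually_ge_atTop k] with l hl
    calc |(f k z).re - (f l z).re| = |(f k z - f l z).re| := by rw [Complex.sub_re]
      _ ≤ δ k + δ l := he k l z hz
      _ ≤ 2 * δ k := by linarith [hδanti hl]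
  have hFu : ∀ k, ∀ z : ℂ, ‖z‖ < 1 → ‖f k z - F z‖ ≤ 2 * δ k * (5 + 4/(1-‖z‖)) := by
    intro k z hz
    have h1 : Tendsto (fun l => ‖f k z - f l z‖) atTop (nhds ‖f k z - F z‖) :=
      ((tendsto_const_nhds.sub (hFt z hz)).norm)
    apply le_of_tendsto h1
    filter_upwards [eventually_ge_atTop k] with l hl
    calc ‖f k z - f l z‖ ≤ (δ k + δ l) * (5 + 4/(1-‖z‖)) := hball k l z hz
      _ ≤ 2 * δ k * (5 + 4/(1-‖z‖)) := by
          have hpos : (0:ℝ) < 5 + 4/(1-‖z‖) := by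
            have : (0:ℝ) < 1 - ‖z‖ := by linarith
            positivity
          nlinarith [hδanti hl]
  -- G continuous
  have hGcont : ContinuousOn G (closedBall (0:ℂ) 1) := by
    have hunif : TendstoUniformlyOn (fun k z => (f k z).re) G atTop (closedBall (0:ℂ) 1) := by
      rw [Metric.tendstoUniformlyOn_iff]
      intro ε hε
      have h2 : Tendsto (fun k => 2 * δ k) atTop (nhds 0) := by
        have h3 := hδ0.const_mul 2
        rwa [mul_zero] at h3
      filter_upwards [h2.eventually (eventually_lt_nhds hε)] with k hk z hz
      rw [Real.dist_eq, abs_sub_comm]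
      exact lt_of_le_of_lt (hGu k z hz) hk
    apply hunif.continuousOn
    apply Filter.Eventually.frequently
    filter_upwards with k
    exact (Complex.continuous_re.comp (hfd k).continuous).continuousOn
  -- F differentiable
  have hFd : DifferentiableOn ℂ F (ball (0:ℂ) 1) := by
    have hlu : TendstoLocallyUniformlyOn (fun k z => f k z) F atTop (ball (0:ℂ) 1) := by
      rw [Metric.tendstoLocallyUniformlyOn_iff]
      intro ε hε x hx
      rw [mem_ball, dist_zero_right] at hx
      set R : ℝ := (1 + ‖x‖)/2 with hRdef
      have hxR : ‖x‖ < R := by rw [hRdef]; linarith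
      have hR1 : R < 1 := by rw [hRdef]; linarith
      have hRpos : (0:ℝ) < 1 - R := by linarith
      refine ⟨ball (0:ℂ) R ∩ ball (0:ℂ) 1, ?_, ?_⟩
      · exact Filter.inter_mem (mem_nhdsWithin_of_mem_nhds (isOpen_ball.mem_nhds
          (by rwa [mem_ball, dist_zero_right]))) self_mem_nhdsWithin
      · have hC : (0:ℝ) < 2 * (5 + 4/(1-R)) := by positivity
        have h2 : Tendsto (fun k => 2 * δ k * (5 + 4/(1-R))) atTop (nhds 0) := by
          have h3 := (hδ0.const_mul 2).mul_const (5 + 4/(1-R))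
          rwa [mul_zero, zero_mul] at h3
        filter_upwards [h2.eventually (eventually_lt_nhds hε)] with k hk y hy
        rw [dist_comm, dist_eq_norm]
        have hy1 : ‖y‖ < 1 := by
          have := hy.2; rwa [mem_ball, dist_zero_right] at this
        have hyR : ‖y‖ < R := by
          have := hy.1; rwa [mem_ball, dist_zero_right] at this
        have hmono : 4/(1-‖y‖) ≤ 4/(1-R) := by
          apply div_le_div_of_nonneg_left (by norm_num) hRpos
          linarith
        calc ‖f k y - F y‖ ≤ 2 * δ k * (5 + 4/(1-‖y‖)) := hFu k y hy1
          _ ≤ 2 * δ k * (5 + 4/(1-R)) := by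
              apply mul_le_mul_of_nonneg_left _ (by positivity)
              linarith
          _ < ε := hk
    apply hlu.differentiableOn ?_ isOpen_ball
    filter_upwards with k
    exact (hfd k).differentiableOn
  -- identities
  have hGF : ∀ z ∈ ball (0:ℂ) 1, G z = (F z).re := by
    intro z hz
    have hz' : ‖z‖ < 1 := by rwa [mem_ball, dist_zero_right] at hz
    have h1 := hGt z (ball_subset_closedBall hz)
    have h2 : Tendsto (fun k => (f k z).re) atTop (nhds ((F z).re)) :=
      (Complex.continuous_re.tendsto _).comp (hFt z hz')
    exact tendsto_nhds_unique h1 h2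
  have hGsphere : ∀ z ∈ sphere (0:ℂ) 1, G z = u z := by
    intro z hz
    have h1 := hGt z (sphere_subset_closedBall hz)
    have h2 : Tendsto (fun k => (f k z).re) atTop (nhds (u z)) := by
      rw [tendsto_iff_dist_tendsto_zero]
      apply squeeze_zero (fun k => dist_nonneg) (fun k => ?_) hδ0
      rw [Real.dist_eq, abs_sub_comm]
      exact hfu k z hz
    exact tendsto_nhds_unique h1 h2
  -- value at 0
  have hmean : ∀ k, (f k 0) = ((((2*π)⁻¹ * ∫ θ in (0:ℝ)..(2*π),
      (f k (Complex.exp (θ * Complex.I))).re) : ℝ) : ℂ) := by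
    intro k
    have hdc : DiffContOnCl ℂ (f k) (ball (0:ℂ) 1) := (hfd k).diffContOnCl
    have := mv18re one_pos hdc
    simp only [Complex.ofReal_one, one_mul] at this
    rw [h0r k]
    congr 1
    rw [this]
    have hπ : (2*π) ≠ 0 := by positivity
    field_simp
  have hintlim : Tendsto (fun k => (2*π)⁻¹ * ∫ θ in (0:ℝ)..(2*π),
      (f k (Complex.exp (θ * Complex.I))).re) atTop
      (nhds ((2*π)⁻¹ * ∫ θ in (0:ℝ)..(2*π), u (Complex.exp (θ * Complex.I)))) := by
    apply Tendsto.const_mul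
    rw [tendsto_iff_dist_tendsto_zero]
    have hd2 := hδ0.mul_const (2*π)
    rw [zero_mul] at hd2
    apply squeeze_zero (fun k => dist_nonneg) (fun k => ?_) hd2
    rw [Real.dist_eq, ← intervalIntegral.integral_sub, ← Real.norm_eq_abs]
    · have hb := intervalIntegral.norm_integral_le_of_norm_le_const (C := δ k)
        (f := fun θ => (f k (Complex.exp (θ * Complex.I))).re - u (Complex.exp (θ * Complex.I)))
        (a := 0) (b := 2*π) ?_
      · calc _ ≤ δ k * |2*π - 0| := hb
          _ = δ k * (2*π) := by rw [sub_zero, _root_.abs_of_pos (by positivity)]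
      · intro θ _
        rw [Real.norm_eq_abs, abs_sub_comm]
        exact hfu k _ (expI_mem_sphere θ)
    · apply Continuous.intervalIntegrable
      exact Complex.continuous_re.comp ((hfd k).continuous.comp
        ((Complex.continuous_ofReal.mul continuous_const).cexp))
    · apply ContinuousOn.intervalIntegrable
      apply (hu.comp_continuous ((Complex.continuous_ofReal.mul continuous_const).cexp)
        (fun θ => expI_mem_sphere θ)).continuousOn
  have hF0 : F 0 = (((2*π)⁻¹ * ∫ θ in (0:ℝ)..(2*π), u (Complex.exp (θ * Complex.I)) : ℝ) : ℂ) := by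
    have h1 := hFt 0 (by simp)
    have h2 : Tendsto (fun k => f k 0) atTop
        (nhds ((((2*π)⁻¹ * ∫ θ in (0:ℝ)..(2*π), u (Complex.exp (θ * Complex.I)) : ℝ)) : ℂ)) := by
      have h3 := (Complex.continuous_ofReal.tendsto _).comp hintlim
      have h4 : (Complex.ofReal ∘ fun k => (2*π)⁻¹ * ∫ θ in (0:ℝ)..(2*π),
          (f k (Complex.exp (θ * Complex.I))).re) = fun k => f k 0 := by
        funext k
        exact (hmean k).symm
      rwa [h4] at h3
    exact tendsto_nhds_unique h1 h2
  exact ⟨F, G, hFd, hGcont, hGF, hGsphere, hF0⟩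

/-- On `V = {z² = w²} ∩ 𝔻²` (two unit disks `𝔻⁺, 𝔻⁻` joined at their centers), a
continuous real function `u = (u⁺, u⁻)` on the two boundary circles is the real part of
(the continuous boundary values of) a holomorphic function on `V` — i.e. a pair
`(f⁺, f⁻)` of holomorphic functions on `𝔻` with `f⁺(0) = f⁻(0)` — if and only if the
mean of `u⁺` over `∂𝔻⁺` equals the mean of `u⁻` over `∂𝔻⁻`. -/
theorem stmt_18 (uP uM : ℂ → ℝ)
    (huP : ContinuousOn uP (sphere (0 : ℂ) 1))
    (huM : ContinuousOn uM (sphere (0 : ℂ) 1)) :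
    (∃ fP fM : ℂ → ℂ, ∃ gP gM : ℂ → ℝ,
      DifferentiableOn ℂ fP (ball (0 : ℂ) 1) ∧
      DifferentiableOn ℂ fM (ball (0 : ℂ) 1) ∧
      fP 0 = fM 0 ∧
      ContinuousOn gP (closedBall (0 : ℂ) 1) ∧
      ContinuousOn gM (closedBall (0 : ℂ) 1) ∧
      (∀ z ∈ ball (0 : ℂ) 1, gP z = (fP z).re) ∧
      (∀ z ∈ ball (0 : ℂ) 1, gM z = (fM z).re) ∧
      (∀ z ∈ sphere (0 : ℂ) 1, gP z = uP z) ∧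
      (∀ z ∈ sphere (0 : ℂ) 1, gM z = uM z)) ↔
    (∫ θ in (0 : ℝ)..(2 * π), uP (Complex.exp (θ * Complex.I))) =
      ∫ θ in (0 : ℝ)..(2 * π), uM (Complex.exp (θ * Complex.I)) := by
  constructor
  · rintro ⟨fP, fM, gP, gM, hfP, hfM, h0, hgP, hgM, hgPf, hgMf, hgPu, hgMu⟩
    rw [fwd18 hfP hgP hgPf hgPu, fwd18 hfM hgM hgMf hgMu, h0]
  · intro hint
    obtain ⟨fP, gP, hfP, hgP, hgPf, hgPu, hP0⟩ := dirichlet18 huP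
    obtain ⟨fM, gM, hfM, hgM, hgMf, hgMu, hM0⟩ := dirichlet18 huM
    refine ⟨fP, fM, gP, gM, hfP, hfM, ?_, hgP, hgM, hgPf, hgMf, hgPu, hgMu⟩
    rw [hP0, hM0, hint]
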